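/- Let a, b ∈ [−1, 1] and λ1, λ2 > 0 be real numbers. Then the 4×4 complex matrix (I + a·σ1) ⊗ (I + b·σ1) + λ1·(σ2⊗σ2) + λ2·(σ3⊗σ3) is positive semidefinite if and only if (1 − a²)(1 − b²) ≥ (λ1 + λ2)². -/

import Mathlib

open Matrix Kronecker ComplexOrder

noncomputable def σ1 : Matrix (Fin 2) (Fin 2) ℂ := !![0, 1; 1, 0]
noncomputable def σ2 : Matrix (Fin 2) (Fin 2) ℂ := !![0, -Complex.I; Complex.I, 0]
noncomputable def σ3 : Matrix (Fin 2) (Fin 2) ℂ := !![1, 0; 0, -1]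

noncomputable def mEnt (a b lam1 lam2 : ℝ) : Fin 2 × Fin 2 → Fin 2 × Fin 2 → ℝ :=
  fun i j => !![1+lam2, b, a, a*b - lam1;
                b, 1-lam2, a*b + lam1, a;
                a, a*b + lam1, 1-lam2, b;
                a*b - lam1, a, b, 1+lam2]
    (finProdFinEquiv (i.1, i.2)) (finProdFinEquiv (j.1, j.2))

lemma Mform (a b lam1 lam2 : ℝ) :
    ((((1 : Matrix (Fin 2) (Fin 2) ℂ) + (a : ℂ) • σ1)
        ⊗ₖ ((1 : Matrix (Fin 2) (Fin 2) ℂ) + (b : ℂ) • σ1))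
      + (lam1 : ℂ) • (σ2 ⊗ₖ σ2)
      + (lam2 : ℂ) • (σ3 ⊗ₖ σ3))
    = Matrix.of (fun i j => ((mEnt a b lam1 lam2 i j : ℝ) : ℂ)) := by
  ext ⟨i, i'⟩ ⟨j, j'⟩
  fin_cases i <;> fin_cases i' <;> fin_cases j <;> fin_cases j' <;>
    simp [σ1, σ2, σ3, mEnt, Matrix.one_apply, finProdFinEquiv] <;> ring

lemma quad (α β γ p q : ℝ) (hsum : 0 ≤ α + γ) (hdet : β ^ 2 ≤ α * γ) :
    0 ≤ α * p ^ 2 + 2 * β * p * q + γ * q ^ 2 := by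
  have hα : 0 ≤ α := by nlinarith [sq_nonneg β]
  have hγ : 0 ≤ γ := by nlinarith [sq_nonneg β]
  rcases eq_or_lt_of_le hα with h | h
  · have hβ : β = 0 := by nlinarith [sq_nonneg β]
    rw [← h, hβ]
    nlinarith [sq_nonneg q, mul_nonneg hγ (sq_nonneg q)]
  · nlinarith [sq_nonneg (α * p + β * q), mul_nonneg (sub_nonneg.2 hdet) (sq_nonneg q)]

set_option maxHeartbeats 1600000 in
/-- for a, b ∈ [−1,1] and lam1, lam2 > 0, the matrix
`(I + a·σ1) ⊗ (I + b·σ1) + lam1·(σ2⊗σ2) + lam2·(σ3⊗σ3)` is PSD iff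
(1 − a²)(1 − b²) ≥ (lam1 + lam2)². -/
theorem stmt5 (a b lam1 lam2 : ℝ) (ha : a ∈ Set.Icc (-1 : ℝ) 1) (hb : b ∈ Set.Icc (-1 : ℝ) 1)
    (h1 : 0 < lam1) (h2 : 0 < lam2) :
    ((((1 : Matrix (Fin 2) (Fin 2) ℂ) + (a : ℂ) • σ1)
        ⊗ₖ ((1 : Matrix (Fin 2) (Fin 2) ℂ) + (b : ℂ) • σ1))
      + (lam1 : ℂ) • (σ2 ⊗ₖ σ2)
      + (lam2 : ℂ) • (σ3 ⊗ₖ σ3)).PosSemidef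
    ↔ (lam1 + lam2) ^ 2 ≤ (1 - a ^ 2) * (1 - b ^ 2) := by
  obtain ⟨ha1, ha2⟩ := ha
  obtain ⟨hb1, hb2⟩ := hb
  rw [Mform]
  constructor
  · intro h
    have hαpos : (0:ℝ) < 1 + lam1 + lam2 - a * b := by nlinarith
    set v : Fin 2 × Fin 2 → ℂ := fun i =>
      ![![((b - a : ℝ) : ℂ), -((1 + lam1 + lam2 - a * b : ℝ) : ℂ)],
        ![((1 + lam1 + lam2 - a * b : ℝ) : ℂ), -((b - a : ℝ) : ℂ)]] i.1 i.2
      with hv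
    have key : dotProduct (star v)
        ((Matrix.of (fun i j => ((mEnt a b lam1 lam2 i j : ℝ) : ℂ))) *ᵥ v)
        = ((2 * (1 + lam1 + lam2 - a * b) * ((1 + lam1 + lam2 - a * b) * (1 - lam1 - lam2 - a * b) - (b - a) ^ 2) : ℝ) : ℂ) := by
      simp [dotProduct, Matrix.mulVec, Fintype.sum_prod_type, Fin.sum_univ_two, mEnt,
        finProdFinEquiv, hv]
      ring_nf
    have h2' := h.dotProduct_mulVec_nonneg v
    rw [key, Complex.zero_le_real] at h2'
    have h3 : (0:ℝ) ≤ (1 + lam1 + lam2 - a * b) * (1 - lam1 - lam2 - a * b) - (b - a) ^ 2 :=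
      (mul_nonneg_iff_of_pos_left hαpos).mp (by linarith)
    nlinarith [h3]
  · intro hcond
    refine Matrix.PosSemidef.of_dotProduct_mulVec_nonneg ?_ ?_
    · show _ᴴ = _
      ext ⟨i, i'⟩ ⟨j, j'⟩
      fin_cases i <;> fin_cases i' <;> fin_cases j <;> fin_cases j' <;>
        simp [mEnt, Matrix.conjTranspose_apply, finProdFinEquiv]
    · intro x
      have hsumS : (0:ℝ) ≤ (1 + a*b + lam2 - lam1) + (1 + a*b + lam1 - lam2) := by nlinarith
      have hdetS : (a + b) ^ 2 ≤ (1 + a*b + lam2 - lam1) * (1 + a*b + lam1 - lam2) := by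
        nlinarith [sq_nonneg (lam1 - lam2), mul_pos h1 h2]
      have hsumA : (0:ℝ) ≤ (1 + lam1 + lam2 - a*b) + (1 - lam1 - lam2 - a*b) := by nlinarith
      have hdetA : (b - a) ^ 2 ≤ (1 + lam1 + lam2 - a*b) * (1 - lam1 - lam2 - a*b) := by
        nlinarith
      have q1 := quad (1 + a*b + lam2 - lam1) (a + b) (1 + a*b + lam1 - lam2)
        ((x 0).re + (x 1).re) ((x (0,1)).re + (x (1,0)).re) hsumS hdetS
      have q2 := quad (1 + a*b + lam2 - lam1) (a + b) (1 + a*b + lam1 - lam2)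
        ((x 0).im + (x 1).im) ((x (0,1)).im + (x (1,0)).im) hsumS hdetS
      have q3 := quad (1 + lam1 + lam2 - a*b) (b - a) (1 - lam1 - lam2 - a*b)
        ((x 0).re - (x 1).re) ((x (0,1)).re - (x (1,0)).re) hsumA hdetA
      have q4 := quad (1 + lam1 + lam2 - a*b) (b - a) (1 - lam1 - lam2 - a*b)
        ((x 0).im - (x 1).im) ((x (0,1)).im - (x (1,0)).im) hsumA hdetA
      simp only [dotProduct, Matrix.mulVec, Fintype.sum_prod_type, Fin.sum_univ_two,
        Matrix.of_apply, mEnt, finProdFinEquiv, Pi.star_apply]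
      rw [Complex.le_def]
      constructor
      · simp [mEnt, finProdFinEquiv, Complex.add_re, Complex.mul_re, Complex.mul_im]
        rw [show (0 : Fin 2 × Fin 2) = (0, 0) from rfl, show (1 : Fin 2 × Fin 2) = (1, 1) from rfl] at q1 q2 q3 q4
        linarith [q1, q2, q3, q4]
      · simp [mEnt, finProdFinEquiv, Complex.add_im, Complex.mul_im, Complex.mul_re]
        ring
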